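/- Let a > 0, ε > 0, f ∈ C²([0,1]), and suppose w : [0,1] × [0,∞) → ℝ is a C² function satisfying w_tt − a² w_xx − a² f''(x) + (1/ε) w_t = 0 on [0,1] × (0,∞) and w(0,t) = w(1,t) = 0 for all t ≥ 0. Then for all t > 0: (d/dt) ∫₀¹ ( w²/(2ε) + w w_t + w_t²/2 + (a²/2) w_x² )(x,t) dx + (1/ε − 3/2) ∫₀¹ w_t²(x,t) dx + (a²/2) ∫₀¹ w_x²(x,t) dx ≤ ∫₀¹ ( (a²/2)(f'(x))² + (a⁴/2)(f''(x))² ) dx. -/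

import Mathlib

open Set Real

/-- Partial derivative with respect to the second (time) variable. -/
noncomputable def pt (u : ℝ → ℝ → ℝ) (x t : ℝ) : ℝ := deriv (u x) t

/-- Partial derivative with respect to the first (space) variable. -/
noncomputable def px (u : ℝ → ℝ → ℝ) (x t : ℝ) : ℝ := deriv (fun y => u y t) x

open MeasureTheory Topology Filter

set_option maxHeartbeats 2000000

lemma sliceT {u : ℝ × ℝ → ℝ} {L : ℝ × ℝ →L[ℝ] ℝ} {x t : ℝ} (h : HasFDerivAt u L (x, t)) :
    HasDerivAt (fun s => u (x, s)) (L (0, 1)) t := by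
  have h2 : HasDerivAt (fun s : ℝ => ((x, s) : ℝ × ℝ)) ((0 : ℝ), (1 : ℝ)) t :=
    HasDerivAt.prodMk (hasDerivAt_const t x) (hasDerivAt_id t)
  exact h.comp_hasDerivAt t h2

lemma sliceX {u : ℝ × ℝ → ℝ} {L : ℝ × ℝ →L[ℝ] ℝ} {x t : ℝ} (h : HasFDerivAt u L (x, t)) :
    HasDerivAt (fun y => u (y, t)) (L (1, 0)) x := by
  have h2 : HasDerivAt (fun y : ℝ => ((y, t) : ℝ × ℝ)) ((1 : ℝ), (0 : ℝ)) x :=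
    HasDerivAt.prodMk (hasDerivAt_id x) (hasDerivAt_const x t)
  exact h.comp_hasDerivAt x h2

lemma sliceT_within {u : ℝ × ℝ → ℝ} {L : ℝ × ℝ →L[ℝ] ℝ} {x t : ℝ} {S : Set (ℝ × ℝ)}
    {s' : Set ℝ} (h : HasFDerivWithinAt u L S (x, t))
    (hmaps : MapsTo (fun s => ((x, s) : ℝ × ℝ)) s' S) :
    HasDerivWithinAt (fun s => u (x, s)) (L (0, 1)) s' t := by
  have h2 : HasDerivWithinAt (fun s : ℝ => ((x, s) : ℝ × ℝ)) ((0 : ℝ), (1 : ℝ)) s' t :=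
    (HasDerivAt.prodMk (hasDerivAt_const t x) (hasDerivAt_id t)).hasDerivWithinAt
  exact h.comp_hasDerivWithinAt t h2 hmaps

/-- Energy differential inequality for the case `b = 0`: if `w` is a C² solution of
`w_tt − a²w_xx − a²f'' + (1/ε)w_t = 0` on `[0,1] × (0,∞)` with `w(0,t) = w(1,t) = 0`, then
for all `t > 0`:
`(d/dt)∫₀¹ (w²/(2ε) + w w_t + w_t²/2 + (a²/2)w_x²) dx + (1/ε − 3/2)∫₀¹ w_t² dx
  + (a²/2)∫₀¹ w_x² dx ≤ ∫₀¹ ((a²/2)f'² + (a⁴/2)f''²) dx`. -/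
theorem energy_differential_inequality
    (a ε : ℝ) (ha : 0 < a) (hε : 0 < ε)
    (f : ℝ → ℝ) (hf : ContDiffOn ℝ 2 f (Icc 0 1))
    (w : ℝ → ℝ → ℝ)
    (hw : ContDiffOn ℝ 2 (fun p : ℝ × ℝ => w p.1 p.2) (Icc 0 1 ×ˢ Ici 0))
    (hpde : ∀ x ∈ Icc (0:ℝ) 1, ∀ t : ℝ, 0 < t →
      pt (pt w) x t - a ^ 2 * px (px w) x t - a ^ 2 * deriv (deriv f) x
        + (1 / ε) * pt w x t = 0)
    (hbc : ∀ t : ℝ, 0 ≤ t → w 0 t = 0 ∧ w 1 t = 0) :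
    ∀ t : ℝ, 0 < t →
      deriv (fun s => ∫ x in (0:ℝ)..1,
          ((w x s) ^ 2 / (2 * ε) + w x s * pt w x s + (pt w x s) ^ 2 / 2
            + a ^ 2 / 2 * (px w x s) ^ 2)) t
        + (1 / ε - 3 / 2) * (∫ x in (0:ℝ)..1, (pt w x t) ^ 2)
        + a ^ 2 / 2 * (∫ x in (0:ℝ)..1, (px w x t) ^ 2)
      ≤ ∫ x in (0:ℝ)..1,
          (a ^ 2 / 2 * (deriv f x) ^ 2 + a ^ 4 / 2 * (deriv (deriv f) x) ^ 2) := by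
  intro t ht
  -- ### Setup
  set S : Set (ℝ × ℝ) := Icc 0 1 ×ˢ Ici 0 with hSdef
  set W : ℝ × ℝ → ℝ := fun p => w p.1 p.2 with hWdef
  have hS : UniqueDiffOn ℝ S := (uniqueDiffOn_Icc (by norm_num)).prod (uniqueDiffOn_Ici 0)
  have hW1 : ContDiffOn ℝ 1 (fun p => fderivWithin ℝ W S p) S :=
    hw.fderivWithin hS (by norm_num)
  set F₁ : ℝ × ℝ → ℝ := fun p => fderivWithin ℝ W S p (1, 0) with hF₁def
  set F₂ : ℝ × ℝ → ℝ := fun p => fderivWithin ℝ W S p (0, 1) with hF₂def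
  have hF₁ : ContDiffOn ℝ 1 F₁ S := hW1.clm_apply contDiffOn_const
  have hF₂ : ContDiffOn ℝ 1 F₂ S := hW1.clm_apply contDiffOn_const
  set G₁₁ : ℝ × ℝ → ℝ := fun p => fderivWithin ℝ F₁ S p (1, 0) with hG₁₁def
  set G₁₂ : ℝ × ℝ → ℝ := fun p => fderivWithin ℝ F₁ S p (0, 1) with hG₁₂def
  set G₂₁ : ℝ × ℝ → ℝ := fun p => fderivWithin ℝ F₂ S p (1, 0) with hG₂₁def
  set G₂₂ : ℝ × ℝ → ℝ := fun p => fderivWithin ℝ F₂ S p (0, 1) with hG₂₂def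
  have hG₁₁ : ContinuousOn G₁₁ S :=
    ((hF₁.fderivWithin (m := 0) hS le_rfl).clm_apply contDiffOn_const).continuousOn
  have hG₁₂ : ContinuousOn G₁₂ S :=
    ((hF₁.fderivWithin (m := 0) hS le_rfl).clm_apply contDiffOn_const).continuousOn
  have hG₂₁ : ContinuousOn G₂₁ S :=
    ((hF₂.fderivWithin (m := 0) hS le_rfl).clm_apply contDiffOn_const).continuousOn
  have hG₂₂ : ContinuousOn G₂₂ S :=
    ((hF₂.fderivWithin (m := 0) hS le_rfl).clm_apply contDiffOn_const).continuousOn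
  have hWc : ContinuousOn W S := hw.continuousOn
  have hF₁c : ContinuousOn F₁ S := hF₁.continuousOn
  have hF₂c : ContinuousOn F₂ S := hF₂.continuousOn
  -- interior
  set U : Set (ℝ × ℝ) := Ioo 0 1 ×ˢ Ioi 0 with hUdef
  have hUopen : IsOpen U := isOpen_Ioo.prod isOpen_Ioi
  have hUS : U ⊆ S := prod_mono Ioo_subset_Icc_self Ioi_subset_Ici_self
  have hSnhds : ∀ p ∈ U, S ∈ 𝓝 p := fun p hp => mem_of_superset (hUopen.mem_nhds hp) hUS
  have hfdW : ∀ p ∈ U, fderivWithin ℝ W S p = fderiv ℝ W p := fun p hp =>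
    fderivWithin_of_mem_nhds (hSnhds p hp)
  have hWca : ∀ p ∈ U, ContDiffAt ℝ 2 W p := fun p hp => (hw p (hUS hp)).contDiffAt (hSnhds p hp)
  -- ### slice derivatives at interior points
  have hwslT : ∀ p ∈ U, HasDerivAt (w p.1) (F₂ p) p.2 := by
    intro p hp
    have hd : HasFDerivAt W (fderivWithin ℝ W S p) p := by
      rw [hfdW p hp]
      exact ((hWca p hp).differentiableAt (by norm_num)).hasFDerivAt
    exact sliceT (x := p.1) (t := p.2) (by simpa using hd)
  have hwslX : ∀ p ∈ U, HasDerivAt (fun y => w y p.2) (F₁ p) p.1 := by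
    intro p hp
    have hd : HasFDerivAt W (fderivWithin ℝ W S p) p := by
      rw [hfdW p hp]
      exact ((hWca p hp).differentiableAt (by norm_num)).hasFDerivAt
    exact sliceX (x := p.1) (t := p.2) (by simpa using hd)
  have hF₂slT : ∀ p ∈ U, HasDerivAt (fun s => F₂ (p.1, s)) (G₂₂ p) p.2 := by
    intro p hp
    have hd : HasFDerivAt F₂ (fderivWithin ℝ F₂ S p) p := by
      rw [fderivWithin_of_mem_nhds (hSnhds p hp)]
      exact (((hF₂ p (hUS hp)).contDiffAt (hSnhds p hp)).differentiableAt one_ne_zero).hasFDerivAt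
    exact sliceT (x := p.1) (t := p.2) (by simpa using hd)
  have hF₂slX : ∀ p ∈ U, HasDerivAt (fun y => F₂ (y, p.2)) (G₂₁ p) p.1 := by
    intro p hp
    have hd : HasFDerivAt F₂ (fderivWithin ℝ F₂ S p) p := by
      rw [fderivWithin_of_mem_nhds (hSnhds p hp)]
      exact (((hF₂ p (hUS hp)).contDiffAt (hSnhds p hp)).differentiableAt one_ne_zero).hasFDerivAt
    exact sliceX (x := p.1) (t := p.2) (by simpa using hd)
  have hF₁slT : ∀ p ∈ U, HasDerivAt (fun s => F₁ (p.1, s)) (G₁₂ p) p.2 := by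
    intro p hp
    have hd : HasFDerivAt F₁ (fderivWithin ℝ F₁ S p) p := by
      rw [fderivWithin_of_mem_nhds (hSnhds p hp)]
      exact (((hF₁ p (hUS hp)).contDiffAt (hSnhds p hp)).differentiableAt one_ne_zero).hasFDerivAt
    exact sliceT (x := p.1) (t := p.2) (by simpa using hd)
  have hF₁slX : ∀ p ∈ U, HasDerivAt (fun y => F₁ (y, p.2)) (G₁₁ p) p.1 := by
    intro p hp
    have hd : HasFDerivAt F₁ (fderivWithin ℝ F₁ S p) p := by
      rw [fderivWithin_of_mem_nhds (hSnhds p hp)]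
      exact (((hF₁ p (hUS hp)).contDiffAt (hSnhds p hp)).differentiableAt one_ne_zero).hasFDerivAt
    exact sliceX (x := p.1) (t := p.2) (by simpa using hd)
  have hpt : ∀ p ∈ U, pt w p.1 p.2 = F₂ p := fun p hp => (hwslT p hp).deriv
  have hpx : ∀ p ∈ U, px w p.1 p.2 = F₁ p := fun p hp => (hwslX p hp).deriv
  -- ### symmetry of second derivatives
  have hsym : ∀ p ∈ U, G₁₂ p = G₂₁ p := by
    intro p hp
    have hW2' : DifferentiableAt ℝ (fderiv ℝ W) p :=
      ((hWca p hp).fderiv_right (m := 1) (by norm_num)).differentiableAt one_ne_zero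
    have key : ∀ v : ℝ × ℝ, fderiv ℝ (fun q => fderiv ℝ W q v) p
        = (ContinuousLinearMap.apply ℝ ℝ v).comp (fderiv ℝ (fderiv ℝ W) p) := by
      intro v
      exact (((ContinuousLinearMap.apply ℝ ℝ v).hasFDerivAt).comp p hW2'.hasFDerivAt).fderiv
    have hev : ∀ v : ℝ × ℝ,
        (fun q => fderivWithin ℝ W S q v) =ᶠ[𝓝 p] (fun q => fderiv ℝ W q v) := by
      intro v
      filter_upwards [hUopen.mem_nhds hp] with q hq
      rw [hfdW q hq]
    have e1 : fderivWithin ℝ F₁ S p = fderiv ℝ (fun q => fderiv ℝ W q (1,0)) p := by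
      rw [fderivWithin_of_mem_nhds (hSnhds p hp)]
      exact Filter.EventuallyEq.fderiv_eq (hev (1,0))
    have e2 : fderivWithin ℝ F₂ S p = fderiv ℝ (fun q => fderiv ℝ W q (0,1)) p := by
      rw [fderivWithin_of_mem_nhds (hSnhds p hp)]
      exact Filter.EventuallyEq.fderiv_eq (hev (0,1))
    have hsy := ((hWca p hp).isSymmSndFDerivAt (by simp)).eq (1,0) (0,1)
    show (fderivWithin ℝ F₁ S p) (0,1) = (fderivWithin ℝ F₂ S p) (1,0)
    rw [e1, e2, key (1,0), key (0,1)]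
    simpa using hsy.symm
  -- ### second time/space derivatives of w at interior points
  have hptpt : ∀ p ∈ U, pt (pt w) p.1 p.2 = G₂₂ p := by
    intro p hp
    have hev : (fun s => pt w p.1 s) =ᶠ[𝓝 p.2] (fun s => F₂ (p.1, s)) := by
      filter_upwards [Ioi_mem_nhds hp.2] with s hs
      exact hpt (p.1, s) ⟨hp.1, hs⟩
    show deriv (fun s => pt w p.1 s) p.2 = G₂₂ p
    rw [hev.deriv_eq]
    exact (hF₂slT p hp).deriv
  have hpxpx : ∀ p ∈ U, px (px w) p.1 p.2 = G₁₁ p := by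
    intro p hp
    have hev : (fun y => px w y p.2) =ᶠ[𝓝 p.1] (fun y => F₁ (y, p.2)) := by
      filter_upwards [Ioo_mem_nhds hp.1.1 hp.1.2] with y hy
      exact hpx (y, p.2) ⟨hy, hp.2⟩
    show deriv (fun y => px w y p.2) p.1 = G₁₁ p
    rw [hev.deriv_eq]
    exact (hF₁slX p hp).deriv
  -- ### facts about f
  set f₁ : ℝ → ℝ := derivWithin f (Icc 0 1) with hf₁def
  set f₂ : ℝ → ℝ := derivWithin f₁ (Icc 0 1) with hf₂def
  have hf₁' : ContDiffOn ℝ 1 f₁ (Icc 0 1) := hf.derivWithin (uniqueDiffOn_Icc one_pos) (by norm_num)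
  have hf₁c : ContinuousOn f₁ (Icc 0 1) := hf₁'.continuousOn
  have hf₂c : ContinuousOn f₂ (Icc 0 1) :=
    (hf₁'.derivWithin (m := 0) (uniqueDiffOn_Icc one_pos) le_rfl).continuousOn
  have hIccN : ∀ x ∈ Ioo (0:ℝ) 1, Icc (0:ℝ) 1 ∈ 𝓝 x := fun x hx =>
    mem_of_superset (Ioo_mem_nhds hx.1 hx.2) Ioo_subset_Icc_self
  have hdf : ∀ x ∈ Ioo (0:ℝ) 1, HasDerivAt f (f₁ x) x := by
    intro x hx
    have := ((hf x (Ioo_subset_Icc_self hx)).contDiffAt (hIccN x hx)).differentiableAt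
      (by norm_num)
    have h := this.hasDerivAt
    rw [hf₁def, derivWithin_of_mem_nhds (hIccN x hx)]
    exact h
  have hdf₁ : ∀ x ∈ Ioo (0:ℝ) 1, HasDerivAt f₁ (f₂ x) x := by
    intro x hx
    have := ((hf₁' x (Ioo_subset_Icc_self hx)).contDiffAt (hIccN x hx)).differentiableAt one_ne_zero
    have h := this.hasDerivAt
    rw [hf₂def, derivWithin_of_mem_nhds (hIccN x hx)]
    exact h
  have hderf : ∀ x ∈ Ioo (0:ℝ) 1, deriv f x = f₁ x := fun x hx => (hdf x hx).deriv
  have hdderf : ∀ x ∈ Ioo (0:ℝ) 1, deriv (deriv f) x = f₂ x := by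
    intro x hx
    have hev : deriv f =ᶠ[𝓝 x] f₁ := by
      filter_upwards [Ioo_mem_nhds hx.1 hx.2] with y hy
      exact hderf y hy
    rw [hev.deriv_eq]
    exact (hdf₁ x hx).deriv
  -- ### boundary values
  have hbF₂ : ∀ x₀ : ℝ, x₀ ∈ Icc (0:ℝ) 1 → (∀ s : ℝ, 0 ≤ s → w x₀ s = 0) →
      ∀ s : ℝ, 0 < s → F₂ (x₀, s) = 0 := by
    intro x₀ hx₀ hzero s hs
    have hdiff : HasFDerivWithinAt W (fderivWithin ℝ W S (x₀, s)) S (x₀, s) := by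
      have : DifferentiableOn ℝ W S := hw.differentiableOn (by norm_num)
      exact (this (x₀, s) ⟨hx₀, le_of_lt hs⟩).hasFDerivWithinAt
    have hmaps : MapsTo (fun r => ((x₀, r) : ℝ × ℝ)) (Ici 0) S := fun r hr => ⟨hx₀, hr⟩
    have h1 : HasDerivWithinAt (fun r => W (x₀, r)) (F₂ (x₀, s)) (Ici 0) s :=
      sliceT_within hdiff hmaps
    have h2 : HasDerivAt (fun r => W (x₀, r)) (F₂ (x₀, s)) s :=
      h1.hasDerivAt (Ici_mem_nhds hs)
    have hev : (fun r => W (x₀, r)) =ᶠ[𝓝 s] (fun _ => (0:ℝ)) := by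
      filter_upwards [Ici_mem_nhds hs] with r hr
      exact hzero r hr
    have h3 : HasDerivAt (fun _ : ℝ => (0:ℝ)) (F₂ (x₀, s)) s := h2.congr_of_eventuallyEq hev.symm
    have h4 : HasDerivAt (fun _ : ℝ => (0:ℝ)) (0:ℝ) s := hasDerivAt_const s 0
    exact (h3.unique h4)
  have hwB : ∀ s : ℝ, 0 ≤ s → W (0, s) = 0 ∧ W (1, s) = 0 := fun s hs => hbc s hs
  -- ### continuity helpers at fixed time / slices
  have hcontSlice : ∀ (g : ℝ × ℝ → ℝ), ContinuousOn g S → ∀ s : ℝ, 0 ≤ s →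
      ContinuousOn (fun x => g (x, s)) (Icc 0 1) := by
    intro g hg s hs
    exact hg.comp ((continuous_id.prodMk continuous_const).continuousOn)
      (fun x hx => ⟨hx, hs⟩)
  have hintInt : ∀ (g : ℝ → ℝ), ContinuousOn g (Icc 0 1) → IntervalIntegrable g volume 0 1 := by
    intro g hg
    apply ContinuousOn.intervalIntegrable
    rwa [uIcc_of_le zero_le_one]
  have hftc : ∀ (g g' : ℝ → ℝ), ContinuousOn g (Icc 0 1) →
      (∀ x ∈ Ioo (0:ℝ) 1, HasDerivAt g (g' x) x) → IntervalIntegrable g' volume 0 1 →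
      ∫ x in (0:ℝ)..1, g' x = g 1 - g 0 := by
    intro g g' hc hd hi
    exact intervalIntegral.integral_eq_sub_of_hasDeriv_right_of_le zero_le_one hc
      (fun x hx => (hd x hx).hasDerivWithinAt) hi
  have haeIoo : ∀ᵐ x : ℝ ∂volume, x ∈ uIoc (0:ℝ) 1 → x ∈ Ioo (0:ℝ) 1 := by
    have h1 : (volume : Measure ℝ) {(1:ℝ)} = 0 := measure_singleton 1
    rw [uIoc_of_le zero_le_one]
    filter_upwards [measure_eq_zero_iff_ae_notMem.mp h1] with x hx hxI
    exact ⟨hxI.1, lt_of_le_of_ne hxI.2 (by simpa using hx)⟩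
  -- ### energy density and its time derivative
  set eW : ℝ × ℝ → ℝ := fun p =>
    W p ^ 2 / (2 * ε) + W p * F₂ p + F₂ p ^ 2 / 2 + a ^ 2 / 2 * F₁ p ^ 2 with heWdef
  set DW : ℝ × ℝ → ℝ := fun p =>
    W p * F₂ p / ε + F₂ p ^ 2 + (W p + F₂ p) * G₂₂ p + a ^ 2 * (F₁ p * G₁₂ p) with hDWdef
  have heWc : ContinuousOn eW S := by
    apply ContinuousOn.add
    apply ContinuousOn.add
    apply ContinuousOn.add
    · exact (hWc.pow 2).div_const _
    · exact hWc.mul hF₂c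
    · exact (hF₂c.pow 2).div_const _
    · exact ((hF₁c.pow 2)).const_smul (a ^ 2 / 2) |>.congr (fun p _ => by simp [smul_eq_mul])
  have hDWc : ContinuousOn DW S := by
    apply ContinuousOn.add
    apply ContinuousOn.add
    apply ContinuousOn.add
    · exact (hWc.mul hF₂c).div_const _
    · exact hF₂c.pow 2
    · exact (hWc.add hF₂c).mul hG₂₂
    · exact (continuousOn_const.mul (hF₁c.mul hG₁₂))
  -- time-slice derivative of the energy density
  have heWderiv : ∀ x ∈ Ioo (0:ℝ) 1, ∀ s : ℝ, 0 < s →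
      HasDerivAt (fun s' => eW (x, s')) (DW (x, s)) s := by
    intro x hx s hs
    have hpU : ((x, s) : ℝ × ℝ) ∈ U := ⟨hx, hs⟩
    have hW' : HasDerivAt (fun s' => w x s') (F₂ (x, s)) s := hwslT (x, s) hpU
    have hF₂' : HasDerivAt (fun s' => F₂ (x, s')) (G₂₂ (x, s)) s := hF₂slT (x, s) hpU
    have hF₁' : HasDerivAt (fun s' => F₁ (x, s')) (G₁₂ (x, s)) s := hF₁slT (x, s) hpU
    have h := (((hW'.pow 2).div_const (2 * ε)).add (hW'.mul hF₂')).add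
      (((hF₂'.pow 2).div_const 2).add ((hF₁'.pow 2).const_mul (a ^ 2 / 2)))
    have hfn : (fun s' => eW (x, s')) = fun s' =>
        (w x s' ^ 2 / (2 * ε) + w x s' * F₂ (x, s')) +
          (F₂ (x, s') ^ 2 / 2 + a ^ 2 / 2 * F₁ (x, s') ^ 2) := by
      funext s'
      simp only [heWdef, hWdef]
      ring
    rw [hfn]
    refine h.congr_deriv ?_
    simp only [hDWdef, hWdef]
    field_simp
    ring
  -- ### Step A: statement integrand agrees with eW for s > 0
  have hstmtE : (fun s => ∫ x in (0:ℝ)..1,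
      ((w x s) ^ 2 / (2 * ε) + w x s * pt w x s + (pt w x s) ^ 2 / 2
        + a ^ 2 / 2 * (px w x s) ^ 2)) =ᶠ[𝓝 t] (fun s => ∫ x in (0:ℝ)..1, eW (x, s)) := by
    filter_upwards [Ioi_mem_nhds ht] with s hs
    apply intervalIntegral.integral_congr_ae
    filter_upwards [haeIoo] with x hx hxI
    have hpU : ((x, s) : ℝ × ℝ) ∈ U := ⟨hx hxI, hs⟩
    simp only [heWdef]
    rw [hpt (x, s) hpU, hpx (x, s) hpU]
  -- ### Step B: differentiation under the integral sign
  have hKsub : (Icc (0:ℝ) 1 ×ˢ Icc (t/2) (2*t) : Set (ℝ × ℝ)) ⊆ S := by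
    apply Set.prod_mono_right
    intro s hs
    have : 0 < t / 2 := by linarith
    exact le_of_lt (lt_of_lt_of_le this hs.1)
  have hKcomp : IsCompact (Icc (0:ℝ) 1 ×ˢ Icc (t/2) (2*t) : Set (ℝ × ℝ)) :=
    isCompact_Icc.prod isCompact_Icc
  obtain ⟨C, hC⟩ := hKcomp.exists_bound_of_continuousOn (hDWc.mono hKsub)
  have hballK : ∀ s ∈ Metric.ball t (t/2), s ∈ Icc (t/2) (2*t) := by
    intro s hs
    rw [Metric.mem_ball, Real.dist_eq, abs_lt] at hs
    constructor <;> linarith [hs.1, hs.2]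
  have hballpos : ∀ s ∈ Metric.ball t (t/2), 0 < s := by
    intro s hs
    have := (hballK s hs).1
    linarith
  have hmeasSlice : ∀ (g : ℝ × ℝ → ℝ), ContinuousOn g S → ∀ s : ℝ, 0 ≤ s →
      AEStronglyMeasurable (fun x => g (x, s)) (volume.restrict (uIoc (0:ℝ) 1)) := by
    intro g hg s hs
    rw [uIoc_of_le zero_le_one]
    exact ((hcontSlice g hg s hs).mono Ioc_subset_Icc_self).aestronglyMeasurable
      measurableSet_Ioc
  have hderivE : HasDerivAt (fun s => ∫ x in (0:ℝ)..1, eW (x, s))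
      (∫ x in (0:ℝ)..1, DW (x, t)) t := by
    have := intervalIntegral.hasDerivAt_integral_of_dominated_loc_of_deriv_le
      (F := fun s x => eW (x, s)) (F' := fun s x => DW (x, s)) (x₀ := t)
      (s := Metric.ball t (t/2)) (bound := fun _ => C) (a := 0) (b := 1) (μ := volume)
      (Metric.ball_mem_nhds t (by linarith))
      ?_ ?_ ?_ ?_ ?_ ?_
    · exact this.2
    · filter_upwards [Ioi_mem_nhds ht] with s hs
      exact hmeasSlice eW heWc s (le_of_lt hs)
    · exact hintInt _ (hcontSlice eW heWc t (le_of_lt ht))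
    · exact hmeasSlice DW hDWc t (le_of_lt ht)
    · filter_upwards [haeIoo] with x hx hxI s hsball
      have hsK := hballK s hsball
      have : ‖DW (x, s)‖ ≤ C := hC (x, s) ⟨Ioo_subset_Icc_self (hx hxI), hsK⟩
      exact this
    · exact intervalIntegrable_const
    · filter_upwards [haeIoo] with x hx hxI s hsball
      exact heWderiv x (hx hxI) s (hballpos s hsball)
  have hderivStmt : deriv (fun s => ∫ x in (0:ℝ)..1,
      ((w x s) ^ 2 / (2 * ε) + w x s * pt w x s + (pt w x s) ^ 2 / 2
        + a ^ 2 / 2 * (px w x s) ^ 2)) t = ∫ x in (0:ℝ)..1, DW (x, t) := by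
    rw [hstmtE.deriv_eq]
    exact hderivE.deriv
  -- ### continuity of time-t slices
  have hWtc := hcontSlice W hWc t ht.le
  have hF₁tc := hcontSlice F₁ hF₁c t ht.le
  have hF₂tc := hcontSlice F₂ hF₂c t ht.le
  have hG₁₁tc := hcontSlice G₁₁ hG₁₁ t ht.le
  have hG₂₁tc := hcontSlice G₂₁ hG₂₁ t ht.le
  -- ### integration by parts / FTC identities at time t
  have hIBP_B : ∫ x in (0:ℝ)..1, (F₁ (x,t) ^ 2 + W (x,t) * G₁₁ (x,t)) = 0 := by
    have hcont : ContinuousOn (fun x => W (x,t) * F₁ (x,t)) (Icc 0 1) := hWtc.mul hF₁tc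
    have hd : ∀ x ∈ Ioo (0:ℝ) 1, HasDerivAt (fun x => W (x,t) * F₁ (x,t))
        (F₁ (x,t) ^ 2 + W (x,t) * G₁₁ (x,t)) x := by
      intro x hx
      have hpU : ((x,t) : ℝ × ℝ) ∈ U := ⟨hx, ht⟩
      have h1 : HasDerivAt (fun y => W (y,t)) (F₁ (x,t)) x := hwslX (x,t) hpU
      have h2 : HasDerivAt (fun y => F₁ (y,t)) (G₁₁ (x,t)) x := hF₁slX (x,t) hpU
      have := h1.mul h2
      refine this.congr_deriv ?_
      ring
    have h0 := hftc _ _ hcont hd (hintInt _ ((hF₁tc.pow 2).add (hWtc.mul hG₁₁tc)))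
    rw [h0]
    have e0 : W (0,t) = 0 := (hbc t ht.le).1
    have e1 : W (1,t) = 0 := (hbc t ht.le).2
    rw [e0, e1]
    ring
  have hF₂t0 : F₂ (0,t) = 0 :=
    hbF₂ 0 ⟨le_rfl, zero_le_one⟩ (fun s hs => (hbc s hs).1) t ht
  have hF₂t1 : F₂ (1,t) = 0 :=
    hbF₂ 1 ⟨zero_le_one, le_rfl⟩ (fun s hs => (hbc s hs).2) t ht
  have hIBP_A : ∫ x in (0:ℝ)..1, (G₁₁ (x,t) * F₂ (x,t) + F₁ (x,t) * G₂₁ (x,t)) = 0 := by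
    have hcont : ContinuousOn (fun x => F₁ (x,t) * F₂ (x,t)) (Icc 0 1) := hF₁tc.mul hF₂tc
    have hd : ∀ x ∈ Ioo (0:ℝ) 1, HasDerivAt (fun x => F₁ (x,t) * F₂ (x,t))
        (G₁₁ (x,t) * F₂ (x,t) + F₁ (x,t) * G₂₁ (x,t)) x := by
      intro x hx
      have hpU : ((x,t) : ℝ × ℝ) ∈ U := ⟨hx, ht⟩
      exact (hF₁slX (x,t) hpU).mul (hF₂slX (x,t) hpU)
    have h0 := hftc _ _ hcont hd (hintInt _ ((hG₁₁tc.mul hF₂tc).add (hF₁tc.mul hG₂₁tc)))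
    rw [h0, hF₂t0, hF₂t1]
    ring
  have hIBP_C : ∫ x in (0:ℝ)..1, (F₁ (x,t) * f₁ x + W (x,t) * f₂ x) = 0 := by
    have hcont : ContinuousOn (fun x => W (x,t) * f₁ x) (Icc 0 1) := hWtc.mul hf₁c
    have hd : ∀ x ∈ Ioo (0:ℝ) 1, HasDerivAt (fun x => W (x,t) * f₁ x)
        (F₁ (x,t) * f₁ x + W (x,t) * f₂ x) x := by
      intro x hx
      have hpU : ((x,t) : ℝ × ℝ) ∈ U := ⟨hx, ht⟩
      exact (hwslX (x,t) hpU).mul (hdf₁ x hx)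
    have h0 := hftc _ _ hcont hd (hintInt _ ((hF₁tc.mul hf₁c).add (hWtc.mul hf₂c)))
    rw [h0]
    have e0 : W (0,t) = 0 := (hbc t ht.le).1
    have e1 : W (1,t) = 0 := (hbc t ht.le).2
    rw [e0, e1]
    ring
  -- ### expand ∫ DW(x,t) using the PDE
  have hDW_split : ∫ x in (0:ℝ)..1, DW (x,t) =
      ∫ x in (0:ℝ)..1,
        ((1 - 1/ε) * F₂ (x,t) ^ 2
          + a ^ 2 * (F₁ (x,t) ^ 2 + W (x,t) * G₁₁ (x,t))
          - a ^ 2 * F₁ (x,t) ^ 2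
          + a ^ 2 * (G₁₁ (x,t) * F₂ (x,t) + F₁ (x,t) * G₂₁ (x,t))
          + a ^ 2 * (F₁ (x,t) * f₁ x + W (x,t) * f₂ x)
          - a ^ 2 * (F₁ (x,t) * f₁ x)
          + a ^ 2 * (F₂ (x,t) * f₂ x)) := by
    apply intervalIntegral.integral_congr_ae
    filter_upwards [haeIoo] with x hx hxI
    have hxIoo := hx hxI
    have hpU : ((x,t) : ℝ × ℝ) ∈ U := ⟨hxIoo, ht⟩
    have hpde' := hpde x (Ioo_subset_Icc_self hxIoo) t ht
    rw [hptpt (x,t) hpU, hpxpx (x,t) hpU, hdderf x hxIoo, hpt (x,t) hpU] at hpde'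
    have hG22 : G₂₂ (x,t) = a ^ 2 * G₁₁ (x,t) + a ^ 2 * f₂ x - (1/ε) * F₂ (x,t) := by
      linarith
    simp only [hDWdef]
    rw [hsym (x,t) hpU, hG22]
    field_simp
    ring
  -- ### integrability of the pieces
  have h₁ : IntervalIntegrable (fun x => F₂ (x,t) ^ 2) volume 0 1 := hintInt _ (hF₂tc.pow 2)
  have h₂ : IntervalIntegrable (fun x => F₁ (x,t) ^ 2) volume 0 1 := hintInt _ (hF₁tc.pow 2)
  have h₃ : IntervalIntegrable (fun x => F₁ (x,t) ^ 2 + W (x,t) * G₁₁ (x,t)) volume 0 1 :=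
    hintInt _ ((hF₁tc.pow 2).add (hWtc.mul hG₁₁tc))
  have h₄ : IntervalIntegrable (fun x => G₁₁ (x,t) * F₂ (x,t) + F₁ (x,t) * G₂₁ (x,t))
      volume 0 1 := hintInt _ ((hG₁₁tc.mul hF₂tc).add (hF₁tc.mul hG₂₁tc))
  have h₅ : IntervalIntegrable (fun x => F₁ (x,t) * f₁ x + W (x,t) * f₂ x) volume 0 1 :=
    hintInt _ ((hF₁tc.mul hf₁c).add (hWtc.mul hf₂c))
  have h₆ : IntervalIntegrable (fun x => F₁ (x,t) * f₁ x) volume 0 1 :=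
    hintInt _ (hF₁tc.mul hf₁c)
  have h₇ : IntervalIntegrable (fun x => F₂ (x,t) * f₂ x) volume 0 1 :=
    hintInt _ (hF₂tc.mul hf₂c)
  have hq₁ : IntervalIntegrable (fun x => f₁ x ^ 2) volume 0 1 := hintInt _ (hf₁c.pow 2)
  have hq₂ : IntervalIntegrable (fun x => f₂ x ^ 2) volume 0 1 := hintInt _ (hf₂c.pow 2)
  have p₁ := h₁.const_mul (1 - 1/ε)
  have p₂ := h₂.const_mul (a ^ 2)
  have p₃ := h₃.const_mul (a ^ 2)
  have p₄ := h₄.const_mul (a ^ 2)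
  have p₅ := h₅.const_mul (a ^ 2)
  have p₆ := h₆.const_mul (a ^ 2)
  have p₇ := h₇.const_mul (a ^ 2)
  -- ### the value of ∫ DW(x,t)
  have hDW_val : ∫ x in (0:ℝ)..1, DW (x,t) =
      (1 - 1/ε) * (∫ x in (0:ℝ)..1, F₂ (x,t) ^ 2)
      + a ^ 2 * (∫ x in (0:ℝ)..1, (F₁ (x,t) ^ 2 + W (x,t) * G₁₁ (x,t)))
      - a ^ 2 * (∫ x in (0:ℝ)..1, F₁ (x,t) ^ 2)
      + a ^ 2 * (∫ x in (0:ℝ)..1, (G₁₁ (x,t) * F₂ (x,t) + F₁ (x,t) * G₂₁ (x,t)))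
      + a ^ 2 * (∫ x in (0:ℝ)..1, (F₁ (x,t) * f₁ x + W (x,t) * f₂ x))
      - a ^ 2 * (∫ x in (0:ℝ)..1, F₁ (x,t) * f₁ x)
      + a ^ 2 * (∫ x in (0:ℝ)..1, F₂ (x,t) * f₂ x) := by
    rw [hDW_split,
      intervalIntegral.integral_add (((((p₁.add p₃).sub p₂).add p₄).add p₅).sub p₆) p₇,
      intervalIntegral.integral_sub ((((p₁.add p₃).sub p₂).add p₄).add p₅) p₆,
      intervalIntegral.integral_add (((p₁.add p₃).sub p₂).add p₄) p₅,
      intervalIntegral.integral_add ((p₁.add p₃).sub p₂) p₄,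
      intervalIntegral.integral_sub (p₁.add p₃) p₂,
      intervalIntegral.integral_add p₁ p₃,
      intervalIntegral.integral_const_mul, intervalIntegral.integral_const_mul,
      intervalIntegral.integral_const_mul, intervalIntegral.integral_const_mul,
      intervalIntegral.integral_const_mul, intervalIntegral.integral_const_mul,
      intervalIntegral.integral_const_mul]
  -- ### rewriting of the statement's integrals
  have hI₂eq : (∫ x in (0:ℝ)..1, (pt w x t) ^ 2) = ∫ x in (0:ℝ)..1, F₂ (x,t) ^ 2 := by
    apply intervalIntegral.integral_congr_ae
    filter_upwards [haeIoo] with x hx hxI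
    rw [hpt (x,t) ⟨hx hxI, ht⟩]
  have hI₁eq : (∫ x in (0:ℝ)..1, (px w x t) ^ 2) = ∫ x in (0:ℝ)..1, F₁ (x,t) ^ 2 := by
    apply intervalIntegral.integral_congr_ae
    filter_upwards [haeIoo] with x hx hxI
    rw [hpx (x,t) ⟨hx hxI, ht⟩]
  have hRHSeq : (∫ x in (0:ℝ)..1,
      (a ^ 2 / 2 * (deriv f x) ^ 2 + a ^ 4 / 2 * (deriv (deriv f) x) ^ 2))
      = a ^ 2 / 2 * (∫ x in (0:ℝ)..1, f₁ x ^ 2) + a ^ 4 / 2 * (∫ x in (0:ℝ)..1, f₂ x ^ 2) := by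
    have : (∫ x in (0:ℝ)..1,
        (a ^ 2 / 2 * (deriv f x) ^ 2 + a ^ 4 / 2 * (deriv (deriv f) x) ^ 2))
        = ∫ x in (0:ℝ)..1, (a ^ 2 / 2 * f₁ x ^ 2 + a ^ 4 / 2 * f₂ x ^ 2) := by
      apply intervalIntegral.integral_congr_ae
      filter_upwards [haeIoo] with x hx hxI
      rw [hderf x (hx hxI), hdderf x (hx hxI)]
    rw [this, intervalIntegral.integral_add (hq₁.const_mul _) (hq₂.const_mul _),
      intervalIntegral.integral_const_mul, intervalIntegral.integral_const_mul]
  -- ### Young's inequality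
  have hYoung : a ^ 2 * (∫ x in (0:ℝ)..1, F₂ (x,t) * f₂ x)
      - a ^ 2 * (∫ x in (0:ℝ)..1, F₁ (x,t) * f₁ x)
      ≤ a ^ 2 / 2 * (∫ x in (0:ℝ)..1, F₁ (x,t) ^ 2)
        + a ^ 2 / 2 * (∫ x in (0:ℝ)..1, f₁ x ^ 2)
        + 1 / 2 * (∫ x in (0:ℝ)..1, F₂ (x,t) ^ 2)
        + a ^ 4 / 2 * (∫ x in (0:ℝ)..1, f₂ x ^ 2) := by
    have hmono : ∫ x in (0:ℝ)..1, (a ^ 2 * (F₂ (x,t) * f₂ x) - a ^ 2 * (F₁ (x,t) * f₁ x))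
        ≤ ∫ x in (0:ℝ)..1, (a ^ 2 / 2 * F₁ (x,t) ^ 2 + a ^ 2 / 2 * f₁ x ^ 2
            + 1 / 2 * F₂ (x,t) ^ 2 + a ^ 4 / 2 * f₂ x ^ 2) := by
      apply intervalIntegral.integral_mono_on zero_le_one (p₇.sub p₆)
        ((((h₂.const_mul _).add (hq₁.const_mul _)).add (h₁.const_mul _)).add
          (hq₂.const_mul _))
      intro x _
      nlinarith [sq_nonneg (a * (F₁ (x,t) + f₁ x)), sq_nonneg (F₂ (x,t) - a ^ 2 * f₂ x)]
    rw [intervalIntegral.integral_sub p₇ p₆, intervalIntegral.integral_const_mul,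
      intervalIntegral.integral_const_mul] at hmono
    rw [intervalIntegral.integral_add (((h₂.const_mul _).add (hq₁.const_mul _)).add
        (h₁.const_mul _)) (hq₂.const_mul _),
      intervalIntegral.integral_add ((h₂.const_mul _).add (hq₁.const_mul _)) (h₁.const_mul _),
      intervalIntegral.integral_add (h₂.const_mul _) (hq₁.const_mul _),
      intervalIntegral.integral_const_mul, intervalIntegral.integral_const_mul,
      intervalIntegral.integral_const_mul, intervalIntegral.integral_const_mul] at hmono
    linarith
  -- ### conclusion
  rw [hIBP_A, hIBP_B, hIBP_C] at hDW_val
  rw [hderivStmt, hI₂eq, hI₁eq, hRHSeq, hDW_val]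
  linarith [hYoung]
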